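/- With v_1, v_2, v_3 defined by the recursive Mex algorithm, for all n ≥ 1 and all 1 ≤ j < i ≤ 3, one has v_i(n+1) - v_j(n+1) - (v_i(n) - v_j(n)) ≥ i - j. -/
import Mathlib

/-- Minimum excluded value of a set of natural numbers. -/
noncomputable def mex (S : Set ℕ) : ℕ := sInf {m : ℕ | m ∉ S}

/-- Coordinates of a set of triples. -/
def coords (G : Set (ℕ × ℕ × ℕ)) : Set ℕ :=
  {k | ∃ x ∈ G, k = x.1 ∨ k = x.2.1 ∨ k = x.2.2}

/-- Pairwise coordinate differences of a set of triples. -/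
def diffs (G : Set (ℕ × ℕ × ℕ)) : Set ℕ :=
  {d | ∃ x ∈ G, d = x.2.1 - x.1 ∨ d = x.2.2 - x.2.1 ∨ d = x.2.2 - x.1}

/-- One step of the Mex algorithm: the next P-position. -/
noncomputable def step (G : Set (ℕ × ℕ × ℕ)) : ℕ × ℕ × ℕ :=
  let F := coords G
  let D := diffs G
  let a := mex F
  let b := mex ((fun d => a + d) '' D ∪ Set.Icc 1 a ∪ F)
  let c := mex ((fun d => b + d) '' D ∪ Set.Icc 1 b ∪ F)
  (a, b, c)

/-- The sets `G_n` of P-positions computed by the Mex algorithm. -/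
noncomputable def Gset : ℕ → Set (ℕ × ℕ × ℕ)
  | 0 => {(0, 0, 0)}
  | n + 1 => Gset n ∪ {step (Gset n)}

/-- The `n`-th P-position `(v_1(n), v_2(n), v_3(n))`. -/
noncomputable def v : ℕ → ℕ × ℕ × ℕ
  | 0 => (0, 0, 0)
  | n + 1 => step (Gset n)

noncomputable def v1 (n : ℕ) : ℕ := (v n).1
noncomputable def v2 (n : ℕ) : ℕ := (v n).2.1
noncomputable def v3 (n : ℕ) : ℕ := (v n).2.2

/-- `F_n`: the set of coordinates of elements of `G_n`. -/
noncomputable def Fset (n : ℕ) : Set ℕ := coords (Gset n)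

/-- `D_n`: the set of pairwise coordinate differences over `G_n`. -/
noncomputable def Dset (n : ℕ) : Set ℕ := diffs (Gset n)

/- ### Auxiliary development -/

lemma mex_le' {S : Set ℕ} {k : ℕ} (h : k ∉ S) : mex S ≤ k := Nat.sInf_le h

lemma mem_of_lt_mex {S : Set ℕ} {k : ℕ} (h : k < mex S) : k ∈ S := by
  by_contra hk
  exact absurd (mex_le' hk) (by omega)

lemma mex_eq_of {S : Set ℕ} {x : ℕ} (hx : x ∉ S) (h : ∀ y, y < x → y ∈ S) : mex S = x := by
  have h1 : mex S ∈ {m : ℕ | m ∉ S} := Nat.sInf_mem ⟨x, hx⟩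
  have h2 : mex S ≤ x := mex_le' hx
  rcases Nat.lt_or_ge (mex S) x with h3 | h3
  · exact absurd (h _ h3) h1
  · omega

lemma step_eq (n : ℕ) : step (Gset n) = v (n+1) := rfl

lemma mem_Gset_iff {n : ℕ} {x : ℕ × ℕ × ℕ} :
    x ∈ Gset n ↔ x = (0,0,0) ∨ ∃ i, i < n ∧ x = v (i+1) := by
  induction n with
  | zero =>
    constructor
    · intro h; exact Or.inl h
    · rintro (rfl | ⟨i, hi, _⟩)
      · rfl
      · omega
  | succ n ih =>
    constructor
    · rintro (h | h)
      · rcases ih.mp h with rfl | ⟨i, hi, rfl⟩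
        · exact Or.inl rfl
        · exact Or.inr ⟨i, by omega, rfl⟩
      · rcases h with rfl
        exact Or.inr ⟨n, by omega, (step_eq n).symm⟩
    · rintro (rfl | ⟨i, hi, rfl⟩)
      · exact Or.inl (ih.mpr (Or.inl rfl))
      · rcases Nat.lt_or_ge i n with h | h
        · exact Or.inl (ih.mpr (Or.inr ⟨i, h, rfl⟩))
        · have hin : i = n := by omega
          right
          show v (i+1) = step (Gset n)
          rw [hin, step_eq]

lemma mem_Fset_iff {n y : ℕ} :
    y ∈ Fset n ↔ y = 0 ∨ ∃ i, i < n ∧ (y = v1 (i+1) ∨ y = v2 (i+1) ∨ y = v3 (i+1)) := by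
  constructor
  · rintro ⟨x, hx, hy⟩
    rcases mem_Gset_iff.mp hx with rfl | ⟨i, hi, rfl⟩
    · left; rcases hy with rfl | rfl | rfl <;> rfl
    · right; exact ⟨i, hi, hy⟩
  · rintro (rfl | ⟨i, hi, hy⟩)
    · exact ⟨(0,0,0), mem_Gset_iff.mpr (Or.inl rfl), Or.inl rfl⟩
    · exact ⟨v (i+1), mem_Gset_iff.mpr (Or.inr ⟨i, hi, rfl⟩), hy⟩

lemma mem_Dset_iff {n d : ℕ} :
    d ∈ Dset n ↔ d = 0 ∨ ∃ i, i < n ∧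
      (d = v2 (i+1) - v1 (i+1) ∨ d = v3 (i+1) - v2 (i+1) ∨ d = v3 (i+1) - v1 (i+1)) := by
  constructor
  · rintro ⟨x, hx, hy⟩
    rcases mem_Gset_iff.mp hx with rfl | ⟨i, hi, rfl⟩
    · left; rcases hy with rfl | rfl | rfl <;> rfl
    · right; exact ⟨i, hi, hy⟩
  · rintro (rfl | ⟨i, hi, hy⟩)
    · exact ⟨(0,0,0), mem_Gset_iff.mpr (Or.inl rfl), Or.inl rfl⟩
    · exact ⟨v (i+1), mem_Gset_iff.mpr (Or.inr ⟨i, hi, rfl⟩), hy⟩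

lemma Fset_mono {i j : ℕ} (h : i ≤ j) : Fset i ⊆ Fset j := by
  intro y hy
  rcases mem_Fset_iff.mp hy with h0 | ⟨k, hk, hc⟩
  · exact mem_Fset_iff.mpr (Or.inl h0)
  · exact mem_Fset_iff.mpr (Or.inr ⟨k, by omega, hc⟩)

lemma Dset_mono {i j : ℕ} (h : i ≤ j) : Dset i ⊆ Dset j := by
  intro y hy
  rcases mem_Dset_iff.mp hy with h0 | ⟨k, hk, hc⟩
  · exact mem_Dset_iff.mpr (Or.inl h0)
  · exact mem_Dset_iff.mpr (Or.inr ⟨k, by omega, hc⟩)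

lemma zero_mem_Fset (n : ℕ) : 0 ∈ Fset n := mem_Fset_iff.mpr (Or.inl rfl)

lemma zero_mem_Dset (n : ℕ) : 0 ∈ Dset n := mem_Dset_iff.mpr (Or.inl rfl)

lemma Fset_bdd (n : ℕ) : ∃ B, ∀ y ∈ Fset n, y ≤ B := by
  induction n with
  | zero =>
    refine ⟨0, fun y hy => ?_⟩
    rcases mem_Fset_iff.mp hy with rfl | ⟨i, hi, _⟩
    · exact le_refl 0
    · omega
  | succ n ih =>
    obtain ⟨B, hB⟩ := ih
    refine ⟨B + v1 (n+1) + v2 (n+1) + v3 (n+1), fun y hy => ?_⟩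
    rcases mem_Fset_iff.mp hy with rfl | ⟨i, hi, hc⟩
    · omega
    · rcases Nat.lt_or_ge i n with h | h
      · have := hB y (mem_Fset_iff.mpr (Or.inr ⟨i, h, hc⟩))
        omega
      · have hin : i = n := by omega
        subst hin
        rcases hc with rfl | rfl | rfl <;> omega

lemma exists_notMem_Fset (n : ℕ) : ∃ y, y ∉ Fset n := by
  obtain ⟨B, hB⟩ := Fset_bdd n
  exact ⟨B+1, fun h => by have := hB _ h; omega⟩

lemma exists_notMem_Dset (n : ℕ) : ∃ y, y ∉ Dset n := by
  obtain ⟨B, hB⟩ := Fset_bdd n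
  refine ⟨B+1, fun h => ?_⟩
  obtain ⟨x, hx, hc⟩ := h
  have h1 : x.1 ≤ B := hB _ ⟨x, hx, Or.inl rfl⟩
  have h2 : x.2.1 ≤ B := hB _ ⟨x, hx, Or.inr (Or.inl rfl)⟩
  have h3 : x.2.2 ≤ B := hB _ ⟨x, hx, Or.inr (Or.inr rfl)⟩
  rcases hc with h | h | h <;> omega

lemma mexF_notMem (n : ℕ) : mex (Fset n) ∉ Fset n :=
  Nat.sInf_mem (exists_notMem_Fset n)

lemma mexD_notMem (n : ℕ) : mex (Dset n) ∉ Dset n :=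
  Nat.sInf_mem (exists_notMem_Dset n)

lemma one_le_mexF (n : ℕ) : 1 ≤ mex (Fset n) := by
  have h1 := mexF_notMem n
  have h2 := zero_mem_Fset n
  rcases Nat.eq_zero_or_pos (mex (Fset n)) with h | h
  · rw [h] at h1; exact absurd h2 h1
  · exact h

lemma one_le_mexD (n : ℕ) : 1 ≤ mex (Dset n) := by
  have h1 := mexD_notMem n
  have h2 := zero_mem_Dset n
  rcases Nat.eq_zero_or_pos (mex (Dset n)) with h | h
  · rw [h] at h1; exact absurd h2 h1
  · exact h

lemma v1_succ (n : ℕ) : v1 (n+1) = mex (Fset n) := rfl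

lemma v2_succ (n : ℕ) : v2 (n+1) =
    mex ((fun d => v1 (n+1) + d) '' Dset n ∪ Set.Icc 1 (v1 (n+1)) ∪ Fset n) := rfl

lemma v3_succ (n : ℕ) : v3 (n+1) =
    mex ((fun d => v2 (n+1) + d) '' Dset n ∪ Set.Icc 1 (v2 (n+1)) ∪ Fset n) := rfl

/- part 2: appended to aux.lean for testing -/
noncomputable def pp (n : ℕ) : ℕ := v2 (n+1) - v1 (n+1)

def Good (n : ℕ) : Prop :=
  mex (Dset n) ≤ pp n ∧ pp n < mex (Dset (n+1)) ∧
  v2 (n+1) = v1 (n+1) + pp n ∧ v3 (n+1) = v2 (n+1) + mex (Dset n)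

lemma v1_lt_mexF {i n : ℕ} (h : i < n) : v1 (i+1) < mex (Fset n) := by
  have h1 : mex (Fset n) ∉ Fset n := mexF_notMem n
  have h2 : v1 (i+1) ∈ Fset n := mem_Fset_iff.mpr (Or.inr ⟨i, h, Or.inl rfl⟩)
  have h3 : ¬ (mex (Fset n) < v1 (i+1)) := by
    intro hlt
    rw [v1_succ] at hlt
    exact h1 (Fset_mono (show i ≤ n by omega) (mem_of_lt_mex hlt))
  have h4 : v1 (i+1) ≠ mex (Fset n) := fun he => h1 (he ▸ h2)
  omega

lemma v1_mono {i j : ℕ} (h : i < j) : v1 (i+1) < v1 (j+1) := by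
  rw [v1_succ j]
  exact v1_lt_mexF h

lemma mexD_mono {i j : ℕ} (h : i ≤ j) : mex (Dset i) ≤ mex (Dset j) := by
  by_contra hlt
  push_neg at hlt
  exact mexD_notMem j (Dset_mono h (mem_of_lt_mex hlt))

lemma mm_strict {i : ℕ} (hG : Good i) : mex (Dset i) < mex (Dset (i+1)) := by
  have hveq : v3 (i+1) = v2 (i+1) + mex (Dset i) := hG.2.2.2
  have h1 : mex (Dset i) ∈ Dset (i+1) :=
    mem_Dset_iff.mpr (Or.inr ⟨i, by omega, Or.inr (Or.inl (by omega))⟩)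
  have h2 : mex (Dset (i+1)) ∉ Dset (i+1) := mexD_notMem _
  have h3 := mexD_mono (show i ≤ i+1 by omega)
  have h4 : mex (Dset (i+1)) ≠ mex (Dset i) := fun he => h2 (he ▸ h1)
  omega

lemma mm_lt_n {n i j : ℕ} (h : ∀ k, k < n → Good k) (hij : i < j) (hjn : j ≤ n) :
    mex (Dset i) < mex (Dset j) :=
  lt_of_lt_of_le (mm_strict (h i (by omega))) (mexD_mono (by omega))

lemma pp_lt {n i j : ℕ} (h : ∀ k, k < n → Good k) (hij : i < j) (hjn : j < n) :
    pp i < pp j := by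
  have g1 := h i (by omega)
  have g2 := h j hjn
  have h1 := g1.2.1
  have h2 := g2.1
  have h3 := mexD_mono (show i+1 ≤ j by omega)
  omega

lemma D_elt {n d : ℕ} (h : ∀ k, k < n → Good k) (hd : d ∈ Dset n)
    (hdm : mex (Dset n) < d) : ∃ k, k < n ∧ d = pp k + mex (Dset k) := by
  rcases mem_Dset_iff.mp hd with rfl | ⟨k, hk, hc⟩
  · omega
  · obtain ⟨g1, g2, g3, g4⟩ := h k hk
    have hmono := mexD_mono (show k+1 ≤ n by omega)
    have hmk := mexD_mono (show k ≤ n by omega)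
    rcases hc with he | he | he
    · omega
    · omega
    · exact ⟨k, hk, by omega⟩

lemma blocker {n t : ℕ} (h : ∀ k, k < n → Good k) (ht : mex (Dset n) ≤ t)
    (hF : mex (Fset n) + t ∈ Fset n) :
    ∃ k, k < n ∧ mex (Fset n) + t = v1 (k+1) + pp k + mex (Dset k) ∧
      v1 (k+1) < mex (Fset n) ∧ pp k < mex (Dset n) ∧ mex (Dset k) < mex (Dset n) := by
  have hm1 := one_le_mexD n
  rcases mem_Fset_iff.mp hF with h0 | ⟨k, hk, hc⟩
  · omega
  · obtain ⟨g1, g2, g3, g4⟩ := h k hk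
    have hv1 : v1 (k+1) < mex (Fset n) := v1_lt_mexF hk
    have hppk : pp k < mex (Dset n) := lt_of_lt_of_le g2 (mexD_mono (by omega))
    have hmmk : mex (Dset k) < mex (Dset n) := mm_lt_n h (by omega) (le_refl n)
    rcases hc with he | he | he
    · omega
    · omega
    · exact ⟨k, hk, by omega, hv1, hppk, hmmk⟩

lemma blocker_gap {n t1 t2 : ℕ} (h : ∀ k, k < n → Good k) (h1 : mex (Dset n) ≤ t1)
    (h12 : t1 < t2) (h2' : t2 ≤ mex (Dset n) + 2)
    (hF1 : mex (Fset n) + t1 ∈ Fset n) (hF2 : mex (Fset n) + t2 ∈ Fset n) : False := by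
  obtain ⟨k, hk, ek, _, _, _⟩ := blocker h h1 hF1
  obtain ⟨j, hj, ej, _, _, _⟩ := blocker h (show mex (Dset n) ≤ t2 by omega) hF2
  rcases Nat.lt_trichotomy k j with hkj | rfl | hkj
  · have hv := v1_mono hkj
    have hp := pp_lt h hkj hj
    have hm := mm_lt_n h hkj (by omega)
    omega
  · omega
  · have hv := v1_mono hkj
    have hp := pp_lt h hkj hk
    have hm := mm_lt_n h hkj (by omega)
    omega

lemma h1bound {n : ℕ} (h : ∀ k, k < n → Good k) (hA : mex (Dset n) + 1 ∈ Dset n)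
    (hB : mex (Dset n) + 2 ∈ Dset n) : False := by
  obtain ⟨k, hk, ek⟩ := D_elt h hA (by omega)
  obtain ⟨l, hl, el⟩ := D_elt h hB (by omega)
  rcases Nat.lt_trichotomy k l with hkl | rfl | hkl
  · have hp := pp_lt h hkl hl
    have hm := mm_lt_n h hkl (by omega)
    omega
  · omega
  · have hp := pp_lt h hkl hk
    have hm := mm_lt_n h hkl (by omega)
    omega

/- part 3 -/
theorem good_all : ∀ n, Good n := by
  intro n
  induction n using Nat.strong_induction_on with
  | _ n IH =>
  have haF : mex (Fset n) ∉ Fset n := mexF_notMem n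
  have hmD : mex (Dset n) ∉ Dset n := mexD_notMem n
  have ha1 : 1 ≤ mex (Fset n) := one_le_mexF n
  have hm1 : 1 ≤ mex (Dset n) := one_le_mexD n
  obtain ⟨p, hpm, hp2, hpD, hpF, hcovD, hcovm⟩ :
      ∃ p, mex (Dset n) ≤ p ∧ p ≤ mex (Dset n) + 2 ∧ p ∉ Dset n ∧
        mex (Fset n) + p ∉ Fset n ∧
        (∀ y, mex (Dset n) < y → y < p → y ∈ Dset n) ∧
        (mex (Dset n) < p → mex (Fset n) + mex (Dset n) ∈ Fset n) := by
    by_cases hblock : mex (Fset n) + mex (Dset n) ∈ Fset n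
    · by_cases hm1D : mex (Dset n) + 1 ∈ Dset n
      · refine ⟨mex (Dset n) + 2, by omega, by omega, ?_, ?_, ?_, fun _ => hblock⟩
        · intro hc; exact h1bound IH hm1D hc
        · intro hc; exact blocker_gap IH (le_refl _) (by omega) (by omega) hblock hc
        · intro y hy1 hy2
          have hye : y = mex (Dset n) + 1 := by omega
          rw [hye]; exact hm1D
      · refine ⟨mex (Dset n) + 1, by omega, by omega, hm1D, ?_, ?_, fun _ => hblock⟩
        · intro hc; exact blocker_gap IH (le_refl _) (by omega) (by omega) hblock hc
        · intro y hy1 hy2; omega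
    · exact ⟨mex (Dset n), le_refl _, by omega, hmD, hblock,
        fun y hy1 hy2 => absurd hy1 (by omega), fun hc => absurd hc (by omega)⟩
  have hb : v2 (n+1) = mex (Fset n) + p := by
    rw [v2_succ n, v1_succ n]
    apply mex_eq_of
    · rintro ((⟨d, hd, hde⟩ | ⟨hi1, hi2⟩) | hF)
      · have hde' : mex (Fset n) + d = mex (Fset n) + p := hde
        have hdp : d = p := by omega
        exact hpD (hdp ▸ hd)
      · omega
      · exact hpF hF
    · intro y hy
      rcases Nat.lt_or_ge y 1 with h0 | h1
      · have hy0 : y = 0 := by omega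
        exact Set.mem_union_right _ (hy0 ▸ zero_mem_Fset n)
      · rcases le_or_gt y (mex (Fset n)) with h2 | h2
        · exact Set.mem_union_left _ (Set.mem_union_right _ ⟨h1, h2⟩)
        · have hyt : y = mex (Fset n) + (y - mex (Fset n)) := by omega
          rcases Nat.lt_or_ge (y - mex (Fset n)) (mex (Dset n)) with h3 | h3
          · exact Set.mem_union_left _ (Set.mem_union_left _
              ⟨y - mex (Fset n), mem_of_lt_mex h3,
                show mex (Fset n) + (y - mex (Fset n)) = y by omega⟩)
          · rcases Nat.eq_or_lt_of_le h3 with he | hlt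
            · have hmem := hcovm (by omega)
              refine Set.mem_union_right _ ?_
              have hye : y = mex (Fset n) + mex (Dset n) := by omega
              rw [hye]; exact hmem
            · have hmem := hcovD (y - mex (Fset n)) hlt (by omega)
              exact Set.mem_union_left _ (Set.mem_union_left _
                ⟨y - mex (Fset n), hmem,
                  show mex (Fset n) + (y - mex (Fset n)) = y by omega⟩)
  have hc : v3 (n+1) = mex (Fset n) + p + mex (Dset n) := by
    rw [v3_succ n, hb]
    apply mex_eq_of
    · rintro ((⟨d, hd, hde⟩ | ⟨hi1, hi2⟩) | hF)
      · have hde' : mex (Fset n) + p + d = mex (Fset n) + p + mex (Dset n) := hde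
        have hdm : d = mex (Dset n) := by omega
        exact hmD (hdm ▸ hd)
      · omega
      · have hF' : mex (Fset n) + (p + mex (Dset n)) ∈ Fset n := by
          have he : mex (Fset n) + (p + mex (Dset n)) = mex (Fset n) + p + mex (Dset n) := by
            omega
          rw [he]; exact hF
        obtain ⟨k, hk, ek, e1, e2, e3⟩ := blocker IH (show mex (Dset n) ≤ p + mex (Dset n) by omega) hF'
        omega
    · intro y hy
      rcases Nat.lt_or_ge y 1 with h0 | h1
      · have hy0 : y = 0 := by omega
        exact Set.mem_union_right _ (hy0 ▸ zero_mem_Fset n)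
      · rcases le_or_gt y (mex (Fset n) + p) with h2 | h2
        · exact Set.mem_union_left _ (Set.mem_union_right _ ⟨h1, h2⟩)
        · have h3 : y - (mex (Fset n) + p) < mex (Dset n) := by omega
          exact Set.mem_union_left _ (Set.mem_union_left _
            ⟨y - (mex (Fset n) + p), mem_of_lt_mex h3,
              show mex (Fset n) + p + (y - (mex (Fset n) + p)) = y by omega⟩)
  have hppn : pp n = p := by
    have hv1 : v1 (n+1) = mex (Fset n) := v1_succ n
    unfold pp
    omega
  have hDcov : ∀ y, y ≤ p → y ∈ Dset (n+1) := by
    intro y hy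
    rcases Nat.lt_or_ge y (mex (Dset n)) with h1 | h1
    · exact Dset_mono (by omega) (mem_of_lt_mex h1)
    · have hv1 : v1 (n+1) = mex (Fset n) := v1_succ n
      rcases Nat.eq_or_lt_of_le h1 with he | h2
      · exact mem_Dset_iff.mpr (Or.inr ⟨n, by omega, Or.inr (Or.inl (by omega))⟩)
      · rcases Nat.eq_or_lt_of_le hy with hyp | hyp
        · exact mem_Dset_iff.mpr (Or.inr ⟨n, by omega, Or.inl (by omega)⟩)
        · exact Dset_mono (by omega) (hcovD y h2 hyp)
  have hfinal : p < mex (Dset (n+1)) := by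
    by_contra hcon
    push_neg at hcon
    exact mexD_notMem (n+1) (hDcov _ hcon)
  have hv1 : v1 (n+1) = mex (Fset n) := v1_succ n
  exact ⟨by omega, by omega, by omega, by omega⟩

theorem stmt8 : ∀ n : ℕ, 1 ≤ n →
    ((v2 (n + 1) : ℤ) - v1 (n + 1)) - ((v2 n : ℤ) - v1 n) ≥ 1 ∧
    ((v3 (n + 1) : ℤ) - v1 (n + 1)) - ((v3 n : ℤ) - v1 n) ≥ 2 ∧
    ((v3 (n + 1) : ℤ) - v2 (n + 1)) - ((v3 n : ℤ) - v2 n) ≥ 1 := by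
  intro n hn
  obtain ⟨k, rfl⟩ : ∃ k, n = k + 1 := ⟨n - 1, by omega⟩
  have g1 := good_all k
  have g2 := good_all (k+1)
  have hmm : mex (Dset k) < mex (Dset (k+1)) := mm_strict g1
  obtain ⟨h1, h2, h3, h4⟩ := g1
  obtain ⟨h1', h2', h3', h4'⟩ := g2
  refine ⟨by omega, by omega, by omega⟩
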